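/- Let n ≥ 2 and let Ω ⊆ ℝⁿ be an open set. Let F : Ω → ℂⁿ and g : Ω → ℂ be measurable and essentially bounded. Suppose that for every ζ ∈ ℂⁿ with ζ·ζ = 0, writing v_ζ(x) := exp(ζ·x), one has F(x)·(Dv_ζ)(x) + g(x) v_ζ(x) = 0 for Lebesgue-almost every x ∈ Ω (equivalently, −i(F(x)·ζ) exp(ζ·x) + g(x) exp(ζ·x) = 0 a.e. in Ω). Then F(x) = 0 for a.e. x ∈ Ω and g(x) = 0 for a.e. x ∈ Ω. -/

import Mathlib

open MeasureTheory
open scoped BigOperators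

/-- Let `n ≥ 2`, `Ω ⊆ ℝⁿ` open, `F : Ω → ℂⁿ` and `g : Ω → ℂ`
measurable and essentially bounded.  If for every null vector `ζ ∈ ℂⁿ`
(`ζ·ζ = 0`), with `v_ζ(x) = exp(ζ·x)`, one has
`F(x)·(Dv_ζ)(x) + g(x) v_ζ(x) = 0`, i.e.
`−i(F(x)·ζ) exp(ζ·x) + g(x) exp(ζ·x) = 0`, for Lebesgue-a.e. `x ∈ Ω`,
then `F = 0` a.e. in `Ω` and `g = 0` a.e. in `Ω`. -/
theorem vanishing_from_null_exponentials (n : ℕ) (hn : 2 ≤ n)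
    (Ω : Set (Fin n → ℝ)) (hΩ : IsOpen Ω)
    (F : (Fin n → ℝ) → (Fin n → ℂ)) (g : (Fin n → ℝ) → ℂ)
    (hFmeas : Measurable F) (hgmeas : Measurable g)
    (hFbdd : MemLp F ⊤ (volume.restrict Ω))
    (hgbdd : MemLp g ⊤ (volume.restrict Ω))
    (hid : ∀ ζ : Fin n → ℂ, (∑ j, ζ j * ζ j) = 0 →
      ∀ᵐ x ∂(volume.restrict Ω),
        (-Complex.I) * (∑ j, F x j * ζ j) * Complex.exp (∑ j, ζ j * (x j : ℂ))
          + g x * Complex.exp (∑ j, ζ j * (x j : ℂ)) = 0) :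
    (∀ᵐ x ∂(volume.restrict Ω), F x = 0) ∧
      (∀ᵐ x ∂(volume.restrict Ω), g x = 0) := by
  have key : ∀ ζ : Fin n → ℂ, (∑ j, ζ j * ζ j) = 0 →
      ∀ᵐ x ∂(volume.restrict Ω),
        (-Complex.I) * (∑ j, F x j * ζ j) + g x = 0 := by
    intro ζ hζ
    filter_upwards [hid ζ hζ] with x hx
    have he : Complex.exp (∑ j, ζ j * (x j : ℂ)) ≠ 0 := Complex.exp_ne_zero _
    have h2 : ((-Complex.I) * (∑ j, F x j * ζ j) + g x) *
        Complex.exp (∑ j, ζ j * (x j : ℂ)) = 0 := by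
      linear_combination hx
    exact (mul_eq_zero.mp h2).resolve_right he
  have hg : ∀ᵐ x ∂(volume.restrict Ω), g x = 0 := by
    filter_upwards [key 0 (by simp)] with x hx
    simpa using hx
  refine ⟨?_, hg⟩
  have hFj : ∀ j, ∀ᵐ x ∂(volume.restrict Ω), F x j = 0 := by
    intro j
    obtain ⟨k, hk⟩ : ∃ k : Fin n, k ≠ j := by
      have h1 : 1 < Fintype.card (Fin n) := by rw [Fintype.card_fin]; omega
      exact Fintype.exists_ne_of_one_lt_card h1 j
    have hsum : ∀ (G : Fin n → ℂ) (c : ℂ),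
        (∑ l, G l * ((if l = j then 1 else 0) + (if l = k then c else 0)))
          = G j + G k * c := by
      intro G c
      have hpt : ∀ l, G l * ((if l = j then 1 else 0) + (if l = k then c else 0))
          = (if l = j then G l else 0) + (if l = k then G l * c else 0) := by
        intro l
        by_cases h1 : l = j <;> by_cases h2 : l = k <;>
          simp [h1, h2, hk, Ne.symm hk] <;> ring
      simp only [hpt, Finset.sum_add_distrib, Finset.sum_ite_eq', Finset.mem_univ, if_true]
    have nullc : ∀ c : ℂ, c * c = -1 →
        (∑ l, ((fun l => (if l = j then (1:ℂ) else 0) + (if l = k then c else 0)) l) *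
             ((fun l => (if l = j then (1:ℂ) else 0) + (if l = k then c else 0)) l)) = 0 := by
      intro c hc
      have := hsum (fun l => (if l = j then (1:ℂ) else 0) + (if l = k then c else 0)) c
      simp only [] at this
      rw [this]
      simp [hk, Ne.symm hk, hc]
    have h1 := key _ (nullc Complex.I Complex.I_mul_I)
    have h2 := key _ (nullc (-Complex.I) (by rw [neg_mul_neg]; exact Complex.I_mul_I))
    filter_upwards [h1, h2, hg] with x hx1 hx2 hxg
    have e1 : -Complex.I * (F x j + F x k * Complex.I) + g x = 0 := by
      simpa only [hsum (F x) Complex.I] using hx1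
    have e2 : -Complex.I * (F x j + F x k * (-Complex.I)) + g x = 0 := by
      simpa only [hsum (F x) (-Complex.I)] using hx2
    linear_combination (Complex.I/2) * e1 + (Complex.I/2) * e2 + (-Complex.I) * hxg
      + (F x j) * Complex.I_mul_I
  filter_upwards [ae_all_iff.mpr hFj] with x hx
  funext l; exact hx l
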